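/- Let ρ := (5/10)|00⟩⟨00| + (3/10)|01⟩⟨01| + (2/10)|10⟩⟨10| on ℂ² ⊗ ℂ². Then (i) the largest eigenvalue of ρ equals 1/2, so ρ ∈ 𝔄𝔉₂; and (ii) there exists a 4×4 unitary matrix U such that the partial transpose of UρU† has a negative eigenvalue (hence UρU† is entangled and ρ is not absolutely separable). -/

import Mathlib

open Matrix Kronecker Complex
open scoped ComplexOrder

/-- The canonical maximally entangled vector `|ψ⁺⟩ = (1/√d) ∑ᵢ |ii⟩` on `ℂ^d ⊗ ℂ^d`. -/
noncomputable def psiPlus (d : ℕ) : (Fin d × Fin d) → ℂ :=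
  fun p => if p.1 = p.2 then ((Real.sqrt d)⁻¹ : ℝ) else 0

/-- The fully entangled fraction: the supremum over `d × d` unitaries `V` of
`⟨ψ⁺| (I ⊗ V)† ρ (I ⊗ V) |ψ⁺⟩`. -/
noncomputable def fef (d : ℕ) (ρ : Matrix (Fin d × Fin d) (Fin d × Fin d) ℂ) : ℝ :=
  ⨆ V : Matrix.unitaryGroup (Fin d) ℂ,
    (star (psiPlus d) ⬝ᵥ
      ((((1 : Matrix (Fin d) (Fin d) ℂ) ⊗ₖ (V : Matrix (Fin d) (Fin d) ℂ))ᴴ * ρ *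
        ((1 : Matrix (Fin d) (Fin d) ℂ) ⊗ₖ (V : Matrix (Fin d) (Fin d) ℂ))) *ᵥ psiPlus d)).re

/-- A density matrix: positive semidefinite with unit trace. -/
def IsDensityMatrix {n : Type*} [Fintype n] (ρ : Matrix n n ℂ) : Prop :=
  ρ.PosSemidef ∧ ρ.trace = 1

/-- `ρ` has absolute fully entangled fraction: `F(UρU†) ≤ 1/d` for every unitary `U`. -/
def AbsFEF (d : ℕ) (ρ : Matrix (Fin d × Fin d) (Fin d × Fin d) ℂ) : Prop :=
  ∀ U ∈ Matrix.unitaryGroup (Fin d × Fin d) ℂ, fef d (U * ρ * Uᴴ) ≤ 1 / d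

/-- Basis vector `|ij⟩` of `ℂ^d ⊗ ℂ^d`. -/
def ket (d : ℕ) (i j : Fin d) : (Fin d × Fin d) → ℂ :=
  fun p => if p = (i, j) then 1 else 0

/-- Rank-one projector `|v⟩⟨v|`. -/
def proj {n : Type*} (v : n → ℂ) : Matrix n n ℂ :=
  Matrix.vecMulVec v (star v)

/-- The partial transpose on the second tensor factor. -/
def ptransposeB {d : ℕ} (M : Matrix (Fin d × Fin d) (Fin d × Fin d) ℂ) :
    Matrix (Fin d × Fin d) (Fin d × Fin d) ℂ :=
  Matrix.of fun p q => M (p.1, q.2) (q.1, p.2)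

/-- Separability of a two-qubit density matrix: a convex combination of product states. -/
def IsSeparable2 (ρ : Matrix (Fin 2 × Fin 2) (Fin 2 × Fin 2) ℂ) : Prop :=
  ∃ (n : ℕ) (p : Fin n → ℝ) (A B : Fin n → Matrix (Fin 2) (Fin 2) ℂ),
    (∀ k, 0 ≤ p k) ∧ (∑ k, p k) = 1 ∧
    (∀ k, (A k).PosSemidef ∧ (A k).trace = 1) ∧
    (∀ k, (B k).PosSemidef ∧ (B k).trace = 1) ∧
    ρ = ∑ k, ((p k : ℝ) : ℂ) • (A k ⊗ₖ B k)

/-- Absolute separability: `UρU†` is separable for every global unitary `U`. -/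
def AbsSep2 (ρ : Matrix (Fin 2 × Fin 2) (Fin 2 × Fin 2) ℂ) : Prop :=
  ∀ U ∈ Matrix.unitaryGroup (Fin 2 × Fin 2) ℂ, IsSeparable2 (U * ρ * Uᴴ)

/-- The state `ρ = (5/10)|00⟩⟨00| + (3/10)|01⟩⟨01| + (2/10)|10⟩⟨10|`. -/
noncomputable def rho12 : Matrix (Fin 2 × Fin 2) (Fin 2 × Fin 2) ℂ :=
  (5/10 : ℂ) • proj (ket 2 0 0) + (3/10 : ℂ) • proj (ket 2 0 1) + (2/10 : ℂ) • proj (ket 2 1 0)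

/-! ### Auxiliary lemmas -/

/-- The diagonal of `rho12`. -/
noncomputable def dvec : (Fin 2 × Fin 2) → ℂ := fun p =>
  if p = (0,0) then 5/10 else if p = (0,1) then 3/10 else if p = (1,0) then 2/10 else 0

lemma rho12_eq : rho12 = Matrix.diagonal dvec := by
  ext ⟨i,j⟩ ⟨k,l⟩
  fin_cases i <;> fin_cases j <;> fin_cases k <;> fin_cases l <;>
    simp [rho12, dvec, proj, ket, Matrix.vecMulVec_apply, Matrix.diagonal_apply, Prod.ext_iff]

lemma rho12_psd : rho12.PosSemidef := by
  rw [rho12_eq]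
  refine Matrix.posSemidef_diagonal_iff.mpr fun p => ?_
  rcases p with ⟨i,j⟩
  fin_cases i <;> fin_cases j <;> simp [dvec, Prod.ext_iff, Complex.le_def] <;> norm_num

lemma half_sub_psd : ((1/2 : ℂ) • (1 : Matrix (Fin 2 × Fin 2) (Fin 2 × Fin 2) ℂ) - rho12).PosSemidef := by
  have h : (1/2 : ℂ) • (1 : Matrix (Fin 2 × Fin 2) (Fin 2 × Fin 2) ℂ) - rho12
      = Matrix.diagonal (fun p => 1/2 - dvec p) := by
    rw [rho12_eq]
    ext p q
    by_cases hpq : p = q <;>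
      simp [hpq, Matrix.diagonal_apply, Matrix.one_apply]
  rw [h]
  refine Matrix.posSemidef_diagonal_iff.mpr fun p => ?_
  rcases p with ⟨i,j⟩
  fin_cases i <;> fin_cases j <;> simp [dvec, Prod.ext_iff, Complex.le_def] <;> norm_num

lemma kron_conjTranspose {l m n p : Type*} (A : Matrix l m ℂ) (B : Matrix n p ℂ) :
    (A ⊗ₖ B)ᴴ = Aᴴ ⊗ₖ Bᴴ := by
  ext ⟨i,j⟩ ⟨k,l'⟩
  simp [Matrix.conjTranspose_apply, Matrix.kroneckerMap_apply, star_mul', mul_comm]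

lemma kron_psd {A B : Matrix (Fin 2) (Fin 2) ℂ} (hA : A.PosSemidef) (hB : B.PosSemidef) :
    (A ⊗ₖ B).PosSemidef := by
  exact hA.kronecker hB

lemma psi_dot : star (psiPlus 2) ⬝ᵥ psiPlus 2 = 1 := by
  have h : (Real.sqrt 2)⁻¹ * (Real.sqrt 2)⁻¹ = 1/2 := by
    rw [← mul_inv, Real.mul_self_sqrt (by norm_num : (0:ℝ) ≤ 2)]
    norm_num
  simp only [dotProduct, psiPlus, Fintype.sum_prod_type, Fin.sum_univ_two, Pi.star_apply]
  norm_num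
  rw [← Complex.ofReal_inv, ← Complex.ofReal_mul, h]
  norm_num

lemma fef_le_half (σ : Matrix (Fin 2 × Fin 2) (Fin 2 × Fin 2) ℂ)
    (hσ : ((1/2 : ℂ) • 1 - σ).PosSemidef) : fef 2 σ ≤ 1/2 := by
  refine Real.iSup_le (fun V => ?_) (by norm_num)
  set W := (1 : Matrix (Fin 2) (Fin 2) ℂ) ⊗ₖ (V : Matrix (Fin 2) (Fin 2) ℂ) with hWdef
  have hWW : Wᴴ * W = 1 := by
    rw [hWdef, kron_conjTranspose, ← Matrix.mul_kronecker_mul]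
    have hV : (V : Matrix (Fin 2) (Fin 2) ℂ)ᴴ * (V : Matrix (Fin 2) (Fin 2) ℂ) = 1 := by
      simpa [Matrix.star_eq_conjTranspose] using (Matrix.mem_unitaryGroup_iff'.mp V.2)
    rw [hV]
    simp
  set Q := Wᴴ * ((1/2 : ℂ) • 1 - σ) * W with hQdef
  have hP : Q.PosSemidef := hσ.conjTranspose_mul_mul_same W
  have hq : (0:ℂ) ≤ star (psiPlus 2) ⬝ᵥ (Q *ᵥ psiPlus 2) := hP.dotProduct_mulVec_nonneg (psiPlus 2)
  have hid : Wᴴ * σ * W = (1/2 : ℂ) • 1 - Q := by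
    rw [hQdef, Matrix.mul_sub, Matrix.sub_mul, Matrix.mul_smul, Matrix.mul_one,
      Matrix.smul_mul, hWW]
    abel
  rw [hid, Matrix.sub_mulVec, dotProduct_sub, Matrix.smul_mulVec, dotProduct_smul,
    Matrix.one_mulVec, psi_dot]
  rw [Complex.le_def] at hq
  simp only [Complex.sub_re, Complex.smul_re]
  simp at hq ⊢
  linarith [hq.1]

lemma eig_le (hH : rho12.IsHermitian) (i : Fin 2 × Fin 2) : hH.eigenvalues i ≤ 1/2 := by
  obtain ⟨w, t, hw, hwv, heq⟩ :
      ∃ (w : (Fin 2 × Fin 2) → ℂ) (t : ℝ), w ≠ 0 ∧ t = hH.eigenvalues i ∧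
        rho12 *ᵥ w = t • w :=
    ⟨_, _, fun h => hH.eigenvectorBasis.orthonormal.ne_zero i
        (by ext p; exact congrFun h p), rfl, hH.mulVec_eigenvectorBasis i⟩
  obtain ⟨p, hp⟩ := Function.ne_iff.mp hw
  have hpe := congrFun heq p
  rw [rho12_eq] at hpe
  simp only [Matrix.mulVec_diagonal, Pi.smul_apply, Complex.real_smul, Pi.zero_apply] at hpe hp
  have hval : dvec p = (t : ℂ) := mul_right_cancel₀ hp hpe
  rw [hwv] at hval
  rcases p with ⟨a,b⟩
  fin_cases a <;> fin_cases b <;>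
    · simp [dvec, Prod.ext_iff] at hval
      have h2 := congrArg Complex.re hval
      norm_num at h2
      linarith

lemma exists_eig_half (hH : rho12.IsHermitian) : ∃ i, hH.eigenvalues i = 1/2 := by
  classical
  set U : Matrix (Fin 2 × Fin 2) (Fin 2 × Fin 2) ℂ :=
    ((hH.eigenvectorUnitary : Matrix.unitaryGroup (Fin 2 × Fin 2) ℂ) :
      Matrix (Fin 2 × Fin 2) (Fin 2 × Fin 2) ℂ) with hUdef
  have hU : U * star U = 1 := Matrix.mem_unitaryGroup_iff.mp hH.eigenvectorUnitary.2
  set D : Matrix (Fin 2 × Fin 2) (Fin 2 × Fin 2) ℂ :=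
    Matrix.diagonal (RCLike.ofReal ∘ hH.eigenvalues) with hDdef
  have hst : rho12 = U * D * star U := hH.spectral_theorem
  have hdet : (rho12 - (1/2:ℂ) • 1).det = 0 := by
    have h1 : rho12 - (1/2:ℂ) • 1 = Matrix.diagonal (fun p => dvec p - 1/2) := by
      rw [rho12_eq]
      ext p q
      by_cases hpq : p = q <;> simp [hpq, Matrix.diagonal_apply, Matrix.one_apply]
    rw [h1, Matrix.det_diagonal]
    refine Finset.prod_eq_zero (Finset.mem_univ ((0:Fin 2),(0:Fin 2))) ?_
    norm_num [dvec]
  have hdec : rho12 - (1/2:ℂ) • 1 = U * (D - (1/2:ℂ) • 1) * star U := by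
    rw [Matrix.mul_sub, Matrix.sub_mul, ← hst, Matrix.mul_smul, Matrix.mul_one,
      Matrix.smul_mul, hU]
  rw [hdec, Matrix.det_mul, Matrix.det_mul] at hdet
  have hU1 : U.det * (star U).det = 1 := by rw [← Matrix.det_mul, hU, Matrix.det_one]
  have hDdet : (D - (1/2:ℂ) • 1).det = 0 := by
    have h2 : U.det * (D - (1/2:ℂ) • 1).det * (star U).det
        = (D - (1/2:ℂ) • 1).det * (U.det * (star U).det) := by ring
    rw [h2, hU1, mul_one] at hdet
    exact hdet
  have h3 : D - (1/2:ℂ) • 1 = Matrix.diagonal (fun p => (hH.eigenvalues p : ℂ) - 1/2) := by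
    rw [hDdef]
    ext p q
    by_cases hpq : p = q <;> simp [hpq, Matrix.diagonal_apply, Matrix.one_apply]
  rw [h3, Matrix.det_diagonal] at hDdet
  obtain ⟨i, _, hi⟩ := Finset.prod_eq_zero_iff.mp hDdet
  refine ⟨i, ?_⟩
  have h4 := congrArg Complex.re (sub_eq_zero.mp hi)
  simpa using h4

/-- The entangling unitary. -/
noncomputable def U0 : Matrix (Fin 2 × Fin 2) (Fin 2 × Fin 2) ℂ := fun p q =>
  if p = (0,0) ∧ q = (0,0) then 20/29
  else if p = (1,1) ∧ q = (0,0) then 21/29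
  else if p = (0,0) ∧ q = (1,1) then -(21/29)
  else if p = (1,1) ∧ q = (1,1) then 20/29
  else if p = q then 1 else 0

lemma hU0 : U0 ∈ Matrix.unitaryGroup (Fin 2 × Fin 2) ℂ := by
  rw [Matrix.mem_unitaryGroup_iff]
  ext ⟨i,j⟩ ⟨k,l⟩
  fin_cases i <;> fin_cases j <;> fin_cases k <;> fin_cases l <;>
    (simp [Matrix.mul_apply, Matrix.star_apply, U0, Fintype.sum_prod_type, Fin.sum_univ_two,
        Matrix.one_apply, Prod.ext_iff, map_ofNat]
     <;> norm_num)

/-- Witness vector for negativity of the partial transpose. -/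
noncomputable def vwit : (Fin 2 × Fin 2) → ℂ := fun p =>
  if p = (0,1) then 5 else if p = (1,0) then -6 else 0

lemma qform_neg :
    star vwit ⬝ᵥ (ptransposeB (U0 * rho12 * U0ᴴ) *ᵥ vwit) = -(2373/8410 : ℂ) := by
  simp only [dotProduct, Matrix.mulVec, ptransposeB, Matrix.mul_apply, rho12_eq,
    Matrix.diagonal_apply, Matrix.conjTranspose_apply, Matrix.of_apply,
    Fintype.sum_prod_type, Fin.sum_univ_two, Pi.star_apply, U0, dvec, vwit, Prod.ext_iff]
  norm_num [map_ofNat]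

lemma ptB_hermitian {M : Matrix (Fin 2 × Fin 2) (Fin 2 × Fin 2) ℂ} (hM : M.IsHermitian) :
    (ptransposeB M).IsHermitian := by
  refine Matrix.ext fun p q => ?_
  rw [Matrix.conjTranspose_apply]
  show star (M (q.1, p.2) (p.1, q.2)) = M (p.1, q.2) (q.1, p.2)
  exact hM.apply _ _

lemma ptB_kron (A B : Matrix (Fin 2) (Fin 2) ℂ) :
    ptransposeB (A ⊗ₖ B) = A ⊗ₖ Bᵀ := by
  ext ⟨i,j⟩ ⟨k,l⟩
  simp [ptransposeB, Matrix.kroneckerMap_apply, Matrix.transpose_apply]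

lemma ptB_sum {n : ℕ} (f : Fin n → Matrix (Fin 2 × Fin 2) (Fin 2 × Fin 2) ℂ) :
    ptransposeB (∑ k, f k) = ∑ k, ptransposeB (f k) := by
  ext p q
  simp [ptransposeB, Matrix.sum_apply]

lemma ptB_smul (c : ℂ) (M : Matrix (Fin 2 × Fin 2) (Fin 2 × Fin 2) ℂ) :
    ptransposeB (c • M) = c • ptransposeB M := by
  ext p q
  simp [ptransposeB]

lemma not_sep_sigma0 : ¬ IsSeparable2 (U0 * rho12 * U0ᴴ) := by
  rintro ⟨n, p, A, B, hp, -, hA, hB, heq⟩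
  have hPT : ptransposeB (U0 * rho12 * U0ᴴ) = ∑ k, ((p k : ℝ) : ℂ) • (A k ⊗ₖ (B k)ᵀ) := by
    rw [heq, ptB_sum]
    refine Finset.sum_congr rfl fun k _ => ?_
    rw [ptB_smul, ptB_kron]
  have hge : (0:ℂ) ≤ star vwit ⬝ᵥ (ptransposeB (U0 * rho12 * U0ᴴ) *ᵥ vwit) := by
    rw [hPT]
    have hsum : (∑ k, ((p k : ℝ) : ℂ) • (A k ⊗ₖ (B k)ᵀ)) *ᵥ vwit
        = ∑ k, (((p k : ℝ) : ℂ) • (A k ⊗ₖ (B k)ᵀ)) *ᵥ vwit := by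
      ext q
      simp only [Matrix.mulVec, dotProduct, Matrix.sum_apply, Finset.sum_mul, Finset.sum_apply]
      exact Finset.sum_comm
    have hsum2 : star vwit ⬝ᵥ (∑ k, (((p k : ℝ) : ℂ) • (A k ⊗ₖ (B k)ᵀ)) *ᵥ vwit)
        = ∑ k, star vwit ⬝ᵥ ((((p k : ℝ) : ℂ) • (A k ⊗ₖ (B k)ᵀ)) *ᵥ vwit) := by
      simp only [dotProduct, Finset.sum_apply, Finset.mul_sum]
      exact Finset.sum_comm
    rw [hsum, hsum2]
    refine Finset.sum_nonneg fun k _ => ?_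
    rw [Matrix.smul_mulVec, dotProduct_smul, smul_eq_mul]
    refine mul_nonneg ?_ ?_
    · exact_mod_cast Complex.zero_le_real.mpr (hp k)
    · exact (kron_psd (hA k).1 ((hB k).1.transpose)).dotProduct_mulVec_nonneg vwit
  rw [qform_neg] at hge
  rw [Complex.le_def] at hge
  norm_num at hge

/-- `ρ = (5/10)|00⟩⟨00| + (3/10)|01⟩⟨01| + (2/10)|10⟩⟨10|` has largest eigenvalue `1/2`,
so `ρ ∈ 𝔄𝔉₂`; yet some unitary conjugate of `ρ` has a partial transpose with a negative
eigenvalue, hence is entangled, so `ρ` is not absolutely separable. -/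
theorem rho12_absFEF_not_absSep (hH : rho12.IsHermitian) :
    ((∀ i, hH.eigenvalues i ≤ 1/2) ∧ (∃ i, hH.eigenvalues i = 1/2)) ∧
    AbsFEF 2 rho12 ∧
    (∃ U ∈ Matrix.unitaryGroup (Fin 2 × Fin 2) ℂ,
      ∃ h : (ptransposeB (U * rho12 * Uᴴ)).IsHermitian,
        (∃ i, h.eigenvalues i < 0) ∧ ¬ IsSeparable2 (U * rho12 * Uᴴ)) ∧
    ¬ AbsSep2 rho12 := by
  have hsig : (ptransposeB (U0 * rho12 * U0ᴴ)).IsHermitian :=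
    ptB_hermitian ((rho12_psd.mul_mul_conjTranspose_same U0).1)
  have hneg : ∃ i, hsig.eigenvalues i < 0 := by
    by_contra hc
    push_neg at hc
    have hpsd := hsig.posSemidef_iff_eigenvalues_nonneg.mpr (fun i => hc i)
    have hval := hpsd.dotProduct_mulVec_nonneg vwit
    rw [qform_neg, Complex.le_def] at hval
    norm_num at hval
  refine ⟨⟨eig_le hH, exists_eig_half hH⟩, ?_, ⟨U0, hU0, hsig, hneg, not_sep_sigma0⟩, ?_⟩
  · intro U hU
    have hUU : U * Uᴴ = 1 := by
      simpa [Matrix.star_eq_conjTranspose] using Matrix.mem_unitaryGroup_iff.mp hU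
    have h2 : (1/2:ℂ) • 1 - U * rho12 * Uᴴ = U * ((1/2:ℂ) • 1 - rho12) * Uᴴ := by
      rw [Matrix.mul_sub, Matrix.sub_mul, Matrix.mul_smul, Matrix.mul_one, Matrix.smul_mul, hUU]
    have h1 : ((1/2:ℂ) • 1 - U * rho12 * Uᴴ).PosSemidef := by
      rw [h2]
      exact half_sub_psd.mul_mul_conjTranspose_same U
    have h3 := fef_le_half _ h1
    norm_num at h3 ⊢
    exact h3
  · intro hAS
    exact not_sep_sigma0 (hAS U0 hU0)
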